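/- Let q ∈ [2,3) and β > 2^{q−1} − 1. Then the function h_β(y) = y^q + (1−y)^q + 2β y^{q/2}(1−y)^{q/2} on [0,1] attains its unique global maximum at y = 1/2 and h_β(1/2) = (1+β)/2^{q−1} > 1. -/

import Mathlib

open Real

lemma claimA (q t : ℝ) (hq : 2 ≤ q) (h0 : 0 < t) (h1 : t ≤ 1) :
    1 - t ^ q ≤ (1 - t) * (1 + t) ^ (q - 1) := by
  set a := q - 2 with ha
  clear_value a
  have ha0 : 0 ≤ a := by simp [ha]; linarith
  have h1t : (0:ℝ) < 1 + t := by linarith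
  -- (1+t)^a ≥ 1 + a * (t/(1+t))
  have l1 : 1 + a * (t / (1 + t)) ≤ (1 + t) ^ a := by
    have hlog : t / (1 + t) ≤ Real.log (1 + t) := by
      have := Real.one_sub_inv_le_log_of_pos h1t
      have : 1 - (1 + t)⁻¹ = t / (1 + t) := by field_simp; ring
      linarith [Real.one_sub_inv_le_log_of_pos h1t, this.symm ▸ (Real.one_sub_inv_le_log_of_pos h1t)]
    have hexp : 1 + a * Real.log (1 + t) ≤ Real.exp (a * Real.log (1 + t)) := by
      linarith [Real.add_one_le_exp (a * Real.log (1 + t))]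
    have hrw : (1 + t) ^ a = Real.exp (a * Real.log (1 + t)) := by
      rw [Real.rpow_def_of_pos h1t, mul_comm]
    rw [hrw]
    have : a * (t / (1 + t)) ≤ a * Real.log (1 + t) := by
      exact mul_le_mul_of_nonneg_left hlog ha0
    linarith
  -- 1 - t^a ≤ a * ((1-t)/t)
  have l2 : 1 - t ^ a ≤ a * ((1 - t) / t) := by
    have hrw : t ^ a = Real.exp (a * Real.log t) := by
      rw [Real.rpow_def_of_pos h0, mul_comm]
    have hexp : 1 + a * Real.log t ≤ t ^ a := by
      rw [hrw]; linarith [Real.add_one_le_exp (a * Real.log t)]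
    have hlog : -Real.log t ≤ (1 - t) / t := by
      have := Real.log_le_sub_one_of_pos (show (0:ℝ) < t⁻¹ by positivity)
      rw [Real.log_inv] at this
      have ht' : t⁻¹ - 1 = (1 - t)/t := by field_simp
      linarith [ht' ▸ this]
    have : 1 - t ^ a ≤ a * (-Real.log t) := by linarith
    calc 1 - t ^ a ≤ a * (-Real.log t) := this
      _ ≤ a * ((1 - t) / t) := mul_le_mul_of_nonneg_left hlog ha0
  -- combine
  have e1 : (1 - t) * (1 + t) ^ (q - 1) = (1 - t^(2:ℝ)) * (1 + t) ^ a := by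
    have : (1 + t) ^ (q - 1) = (1 + t) * (1 + t) ^ a := by
      rw [ha, show q - 1 = 1 + (q - 2) by ring, Real.rpow_add h1t, Real.rpow_one]
    rw [this, show (2:ℝ) = ((2:ℕ):ℝ) by norm_num, Real.rpow_natCast]
    ring
  have e2 : t ^ q = t ^ (2:ℝ) * t ^ a := by
    rw [ha, ← Real.rpow_add h0]; ring_nf
  have ht2 : t ^ (2:ℝ) = t * t := by
    rw [show (2:ℝ) = ((2:ℕ):ℝ) by norm_num, Real.rpow_natCast]; ring
  have hsq : 0 ≤ 1 - t ^ (2:ℝ) := by rw [ht2]; nlinarith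
  have step1 : (1 - t^(2:ℝ)) * (1 + a * (t / (1 + t))) ≤ (1 - t^(2:ℝ)) * (1 + t) ^ a :=
    mul_le_mul_of_nonneg_left l1 hsq
  have step2 : (1 - t^(2:ℝ)) * (1 + a * (t / (1 + t))) = (1 - t^(2:ℝ)) + a * t * (1 - t) := by
    rw [ht2]; field_simp; ring
  have step3 : t ^ (2:ℝ) * (1 - t ^ a) ≤ a * t * (1 - t) := by
    have := mul_le_mul_of_nonneg_left l2 (show (0:ℝ) ≤ t^(2:ℝ) by positivity)
    calc t ^ (2:ℝ) * (1 - t ^ a) ≤ t ^ (2:ℝ) * (a * ((1 - t) / t)) := this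
      _ = a * t * (1 - t) := by rw [ht2]; field_simp
  calc 1 - t ^ q = (1 - t^(2:ℝ)) + t^(2:ℝ) * (1 - t ^ a) := by rw [e2]; ring
    _ ≤ (1 - t^(2:ℝ)) + a * t * (1 - t) := by linarith
    _ = (1 - t^(2:ℝ)) * (1 + a * (t / (1 + t))) := step2.symm
    _ ≤ (1 - t^(2:ℝ)) * (1 + t) ^ a := step1
    _ = (1 - t) * (1 + t) ^ (q - 1) := e1.symm

lemma hasDerivAt_g (q : ℝ) {x : ℝ} (hx : 0 < x) :
    HasDerivAt (fun x : ℝ => ((1+x)^q - 1 - x^q) * x^(-(q/2)))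
      ((q*(1+x)^(q-1) - q*x^(q-1)) * x^(-(q/2))
        + ((1+x)^q - 1 - x^q) * ((-(q/2)) * x^(-(q/2)-1))) x := by
  have h1x : (0:ℝ) < 1 + x := by linarith
  have h1 : HasDerivAt (fun y : ℝ => (1+y)^q) (1 * q * (1+x)^(q-1)) x :=
    ((hasDerivAt_id x).const_add 1).rpow_const (Or.inl h1x.ne')
  have h2 : HasDerivAt (fun y : ℝ => y^q) (q * x^(q-1)) x :=
    Real.hasDerivAt_rpow_const (Or.inl hx.ne')
  have h3 : HasDerivAt (fun y : ℝ => y^(-(q/2))) ((-(q/2)) * x^(-(q/2)-1)) x :=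
    Real.hasDerivAt_rpow_const (Or.inl hx.ne')
  have hu : HasDerivAt (fun y : ℝ => (1+y)^q - 1 - y^q) (q*(1+x)^(q-1) - q*x^(q-1)) x := by
    have := (h1.sub_const 1).sub h2
    simp only [one_mul] at this; exact this
  exact hu.mul h3

lemma bkey (q x : ℝ) (hq : 2 ≤ q) (h0 : 0 < x) (h1 : x ≤ 1) :
    2*x*((1+x)^(q-1) - x^(q-1)) - ((1+x)^q - 1 - x^q) ≤ 0 := by
  have h1x : (0:ℝ) < 1 + x := by linarith
  have e1 : (1+x)^q = (1+x) * (1+x)^(q-1) := by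
    have := Real.rpow_add h1x 1 (q-1)
    rw [Real.rpow_one] at this
    rw [show (1:ℝ)+(q-1) = q by ring] at this
    exact this
  have e2 : x^q = x * x^(q-1) := by
    have := Real.rpow_add h0 1 (q-1)
    rw [Real.rpow_one] at this
    rw [show (1:ℝ)+(q-1) = q by ring] at this
    exact this
  have hA := claimA q x hq h0 h1
  rw [e2] at hA
  rw [e1, e2]
  nlinarith [hA]

lemma Fnonneg (q t : ℝ) (hq : 2 ≤ q) (h0 : 0 < t) (h1 : t ≤ 1) :
    ((2:ℝ)^q - 2) * t^(q/2) ≤ (1+t)^q - 1 - t^q := by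
  set g : ℝ → ℝ := fun x => ((1+x)^q - 1 - x^q) * x^(-(q/2)) with hg
  have hmono : AntitoneOn g (Set.Icc t 1) := by
    apply antitoneOn_of_deriv_nonpos (convex_Icc t 1)
    · intro x hx
      exact (hasDerivAt_g q (lt_of_lt_of_le h0 hx.1)).continuousAt.continuousWithinAt
    · intro x hx
      rw [interior_Icc] at hx
      exact (hasDerivAt_g q (lt_of_lt_of_le h0 hx.1.le)).differentiableAt.differentiableWithinAt
    · intro x hx
      rw [interior_Icc] at hx
      have hx0 : (0:ℝ) < x := lt_of_lt_of_le h0 hx.1.le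
      rw [(hasDerivAt_g q hx0).deriv]
      have hc : (0:ℝ) < x^(-(q/2)-1) := Real.rpow_pos_of_pos hx0 _
      have ev : x^(-(q/2)) = x * x^(-(q/2)-1) := by
        have := Real.rpow_add hx0 1 (-(q/2)-1)
        rw [Real.rpow_one] at this
        rw [show (1:ℝ)+(-(q/2)-1) = -(q/2) by ring] at this
        exact this
      have hB := bkey q x hq hx0 hx.2.le
      have hq0 : (0:ℝ) < q := by linarith
      rw [ev]
      have key : (q*(1+x)^(q-1) - q*x^(q-1)) * (x * x^(-(q/2)-1))
          + ((1+x)^q - 1 - x^q) * (-(q/2) * x^(-(q/2)-1))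
          = (q/2) * x^(-(q/2)-1)
            * (2*x*((1+x)^(q-1) - x^(q-1)) - ((1+x)^q - 1 - x^q)) := by ring
      rw [key]
      have : (0:ℝ) ≤ (q/2) * x^(-(q/2)-1) := by positivity
      exact mul_nonpos_of_nonneg_of_nonpos this hB
  have h1m : (1:ℝ) ∈ Set.Icc t 1 := ⟨h1, le_refl 1⟩
  have htm : t ∈ Set.Icc t 1 := ⟨le_refl t, h1⟩
  have := hmono htm h1m h1
  have hg1 : g 1 = (2:ℝ)^q - 2 := by
    simp only [hg]
    norm_num
    ring
  rw [hg1] at this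
  -- this : 2^q - 2 ≤ g t
  have htq : (0:ℝ) < t^(q/2) := Real.rpow_pos_of_pos h0 _
  have hneg : t^(-(q/2)) = (t^(q/2))⁻¹ := by
    rw [← Real.rpow_neg h0.le]
  have : ((2:ℝ)^q - 2) ≤ ((1+t)^q - 1 - t^q) / t^(q/2) := by
    rw [div_eq_mul_inv, ← hneg]
    exact this
  calc ((2:ℝ)^q - 2) * t^(q/2) ≤ (((1+t)^q - 1 - t^q) / t^(q/2)) * t^(q/2) :=
        mul_le_mul_of_nonneg_right this htq.le
    _ = (1+t)^q - 1 - t^q := by field_simp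

lemma crit (q y : ℝ) (hq : 2 ≤ q) (h0 : 0 < y) (h1 : y ≤ 1/2) :
    y^q + (1-y)^q + ((2:ℝ)^q - 2) * (y*(1-y))^(q/2) ≤ 1 := by
  have hy1 : (0:ℝ) < 1 - y := by linarith
  set t := y / (1-y) with htdef
  have ht0 : 0 < t := div_pos h0 hy1
  have ht1 : t ≤ 1 := by rw [htdef, div_le_one hy1]; linarith
  have hF := Fnonneg q t hq ht0 ht1
  have hyq : (0:ℝ) < (1-y)^q := Real.rpow_pos_of_pos hy1 q
  have e1 : (1+t) * (1-y) = 1 := by rw [htdef]; field_simp; ring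
  have e2 : t * (1-y) = y := by rw [htdef]; field_simp
  have p1 : (1+t)^q * (1-y)^q = 1 := by
    rw [← Real.mul_rpow (by positivity) hy1.le, e1, Real.one_rpow]
  have p2 : t^q * (1-y)^q = y^q := by
    rw [← Real.mul_rpow ht0.le hy1.le, e2]
  have p3 : t^(q/2) * (1-y)^q = (y*(1-y))^(q/2) := by
    have hsplit : (1-y)^q = (1-y)^(q/2) * (1-y)^(q/2) := by
      rw [← Real.rpow_add hy1]; ring_nf
    rw [hsplit, ← mul_assoc, ← Real.mul_rpow ht0.le hy1.le, e2,
      ← Real.mul_rpow h0.le hy1.le]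
  have m := mul_le_mul_of_nonneg_right hF hyq.le
  rw [mul_assoc, p3, sub_mul, sub_mul, p2] at m
  rw [sub_mul, p1, one_mul] at m
  linarith

lemma crit' (q y : ℝ) (hq : 2 ≤ q) (h0 : 0 ≤ y) (h1 : y ≤ 1) :
    y^q + (1-y)^q + ((2:ℝ)^q - 2) * (y*(1-y))^(q/2) ≤ 1 := by
  have hqne : q ≠ 0 := by linarith
  have hqne2 : q/2 ≠ 0 := by simp; linarith
  rcases eq_or_lt_of_le h0 with h0' | h0'
  · rw [← h0']
    simp [Real.zero_rpow hqne, Real.zero_rpow hqne2]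
  rcases eq_or_lt_of_le h1 with h1' | h1'
  · rw [h1']
    simp [Real.zero_rpow hqne, Real.zero_rpow hqne2]
  rcases le_or_gt y (1/2) with hc | hc
  · exact crit q y hq h0' hc
  · have := crit q (1-y) hq (by linarith) (by linarith)
    have e : 1 - (1-y) = y := by ring
    rw [e] at this
    calc y^q + (1-y)^q + ((2:ℝ)^q - 2) * (y*(1-y))^(q/2)
        = (1-y)^q + y^q + ((2:ℝ)^q - 2) * ((1-y)*y)^(q/2) := by rw [mul_comm y (1-y)]; ring
      _ ≤ 1 := this

theorem stmt_9 (q β : ℝ) (hq1 : 2 ≤ q) (hq2 : q < 3) (hβ : (2:ℝ) ^ (q-1) - 1 < β) :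
    ((1:ℝ)/2) ^ q + (1 - 1/2 : ℝ) ^ q
        + 2 * β * ((1:ℝ)/2) ^ (q/2) * (1 - 1/2 : ℝ) ^ (q/2)
      = (1 + β) / (2:ℝ) ^ (q-1) ∧
    1 < (1 + β) / (2:ℝ) ^ (q-1) ∧
    ∀ y ∈ Set.Icc (0:ℝ) 1, y ≠ 1/2 →
      y ^ q + (1 - y) ^ q + 2 * β * y ^ (q/2) * (1 - y) ^ (q/2)
        < (1 + β) / (2:ℝ) ^ (q-1) := by
  have hA : (0:ℝ) < (2:ℝ)^(q-1) := Real.rpow_pos_of_pos two_pos _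
  have h2q : (2:ℝ)^q = 2 * (2:ℝ)^(q-1) := by
    have := Real.rpow_add (show (0:ℝ) < 2 by norm_num) 1 (q-1)
    rw [Real.rpow_one] at this
    rw [show (1:ℝ)+(q-1) = q by ring] at this
    exact this
  have hhalf : ((1:ℝ)/2)^q = ((2:ℝ)^q)⁻¹ := by
    rw [Real.div_rpow zero_le_one (by norm_num), Real.one_rpow, one_div]
  have P2 : ((1:ℝ)/2)^(q/2) * ((1:ℝ)/2)^(q/2) = ((1:ℝ)/2)^q := by
    rw [← Real.rpow_add (by norm_num : (0:ℝ) < 1/2)]; ring_nf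
  have he : (1 - 1/2 : ℝ) = 1/2 := by norm_num
  refine ⟨?_, ?_, ?_⟩
  · rw [he]
    rw [show 2*β*((1:ℝ)/2)^(q/2)*((1:ℝ)/2)^(q/2) = 2*β*(((1:ℝ)/2)^(q/2)*((1:ℝ)/2)^(q/2)) by ring,
      P2, hhalf, h2q]
    field_simp
    ring
  · rw [lt_div_iff₀ hA]
    linarith
  · intro y hy hne
    obtain ⟨hy0, hy1⟩ := hy
    have hy1' : (0:ℝ) ≤ 1 - y := by linarith
    have hP : y^(q/2) * (1-y)^(q/2) = (y*(1-y))^(q/2) := (Real.mul_rpow hy0 hy1').symm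
    have hcrit := crit' q y hq1 hy0 hy1
    have hcoef : (0:ℝ) < 2*β - (2:ℝ)^q + 2 := by rw [h2q]; linarith
    have hPlt : (y*(1-y))^(q/2) < ((2:ℝ)^q)⁻¹ := by
      have hne' : y - 1/2 ≠ 0 := sub_ne_zero.mpr hne
      have hsq : 0 < (y - 1/2)^2 := by positivity
      have hlt : y*(1-y) < 1/4 := by nlinarith
      have := Real.rpow_lt_rpow (mul_nonneg hy0 hy1') hlt (by linarith : (0:ℝ) < q/2)
      calc (y*(1-y))^(q/2) < ((1:ℝ)/4)^(q/2) := this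
        _ = ((2:ℝ)^q)⁻¹ := by
            rw [show (1:ℝ)/4 = ((1:ℝ)/2)*((1:ℝ)/2) by norm_num,
              Real.mul_rpow (by norm_num) (by norm_num), P2, hhalf]
    have hPmul := mul_lt_mul_of_pos_left hPlt hcoef
    calc y ^ q + (1 - y) ^ q + 2 * β * y ^ (q/2) * (1 - y) ^ (q/2)
        = y ^ q + (1 - y) ^ q + 2 * β * (y*(1-y))^(q/2) := by rw [mul_assoc, hP]
      _ ≤ 1 + (2*β - (2:ℝ)^q + 2) * (y*(1-y))^(q/2) := by nlinarith
      _ < 1 + (2*β - (2:ℝ)^q + 2) * ((2:ℝ)^q)⁻¹ := by linarith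
      _ = (1 + β) / (2:ℝ)^(q-1) := by rw [h2q]; field_simp; ring
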